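/- Let (R, 𝔪) be a Noetherian local domain admitting a canonical module ω_R which is an ideal of R, and let a ∈ 𝔪 have no square root in Frac(R). Then S := R ⊕ ω_R with multiplication (r,x)(r',x') = (rr' + xx'a, rx' + r'x) is an integral domain and a local ring with maximal ideal 𝔪 ⊕ ω_R. -/

import Mathlib

open Polynomial IsLocalRing

private lemma aux_lin_zero {A : Type*} [CommRing A] [IsDomain A] {a r x : A}
    (h : ((X : A[X]) ^ 2 - C a) ∣ (C r + C x * X)) : r = 0 ∧ x = 0 := by
  have hd : ((X : A[X]) ^ 2 - C a).degree = 2 := degree_X_pow_sub_C (by norm_num) a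
  have h2 : C r + C x * X = C x * X + C r := by ring
  rw [h2] at h
  have h3 : C x * X + C r = 0 :=
    eq_zero_of_dvd_of_degree_lt h (lt_of_le_of_lt degree_linear_le (by rw [hd]; norm_num))
  constructor
  · have h0 := congrArg (fun p => Polynomial.coeff p 0) h3
    simpa using h0
  · have h1 := congrArg (fun p => Polynomial.coeff p 1) h3
    simpa using h1

private lemma aux_rep_eq {A : Type*} [CommRing A] [IsDomain A] {a r x r' x' : A}
    (h : Ideal.Quotient.mk (Ideal.span {(X : A[X]) ^ 2 - C a}) (C r + C x * X) =
      Ideal.Quotient.mk (Ideal.span {(X : A[X]) ^ 2 - C a}) (C r' + C x' * X)) :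
    r = r' ∧ x = x' := by
  rw [Ideal.Quotient.eq, Ideal.mem_span_singleton] at h
  have h2 : C r + C x * X - (C r' + C x' * X) = C (r - r') + C (x - x') * X := by
    simp only [C_sub]; ring
  rw [h2] at h
  obtain ⟨h3, h4⟩ := aux_lin_zero h
  exact ⟨sub_eq_zero.mp h3, sub_eq_zero.mp h4⟩

private lemma aux_mulrep {A : Type*} [CommRing A] (a r x r' x' : A) :
    Ideal.Quotient.mk (Ideal.span {(X : A[X]) ^ 2 - C a}) (C r + C x * X) *
      Ideal.Quotient.mk (Ideal.span {(X : A[X]) ^ 2 - C a}) (C r' + C x' * X) =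
    Ideal.Quotient.mk (Ideal.span {(X : A[X]) ^ 2 - C a})
      (C (r * r' + x * x' * a) + C (r * x' + x * r') * X) := by
  rw [← map_mul, Ideal.Quotient.eq, Ideal.mem_span_singleton]
  refine ⟨C (x * x'), ?_⟩
  simp only [C_add, C_mul]
  ring

set_option maxHeartbeats 1000000 in
set_option synthInstance.maxHeartbeats 400000 in
/-- Let `(R, 𝔪)` be a Noetherian local domain with a canonical module
`ω_R` realized as a (nonzero) ideal `ω ⊆ R`, and let `a ∈ 𝔪` have no square root in
`Frac(R)`.  The ring `S = R ⊕ ω` with multiplication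
`(r,x)(r',x') = (rr' + xx'a, rx' + r'x)`, realized as the subring
`{r + x·X : r ∈ R, x ∈ ω}` of `R[X]/(X² - a)`, is an integral domain and a local ring
with maximal ideal `𝔪 ⊕ ω`. -/
theorem stmt_13 (R : Type*) [CommRing R] [IsDomain R] [IsNoetherianRing R] [IsLocalRing R]
    (ω : Ideal R) (hω : ω ≠ ⊥)
    (a : R) (ham : a ∈ maximalIdeal R)
    (ha : ¬∃ q : FractionRing R, q ^ 2 = algebraMap R (FractionRing R) a)
    (S : Subring (R[X] ⧸ Ideal.span {(X : R[X]) ^ 2 - C a}))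
    (hS : (S : Set (R[X] ⧸ Ideal.span {(X : R[X]) ^ 2 - C a})) =
      {y | ∃ r x', x' ∈ ω ∧ y = Ideal.Quotient.mk _ (C r + C x' * X)}) :
    IsDomain S ∧
      ∃ _ : IsLocalRing S,
        ∀ s : S, s ∈ maximalIdeal S ↔
          ∃ r ∈ maximalIdeal R, ∃ x' ∈ ω,
            (s : R[X] ⧸ Ideal.span {(X : R[X]) ^ 2 - C a}) =
              Ideal.Quotient.mk _ (C r + C x' * X) := by
  classical
  let K := FractionRing R
  let i : R →+* K := algebraMap R K
  have hinj : Function.Injective i := IsFractionRing.injective R K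
  have hgirr : Irreducible ((X : K[X]) ^ 2 - C (i a)) := by
    rw [X_pow_sub_C_irreducible_iff_of_prime Nat.prime_two]
    intro b hb
    exact ha ⟨b, hb⟩
  haveI : Fact (Irreducible ((X : K[X]) ^ 2 - C (i a))) := ⟨hgirr⟩
  have hmapf : ((X : R[X]) ^ 2 - C a).map i = (X : K[X]) ^ 2 - C (i a) := by
    simp [Polynomial.map_pow]
  let φ : (R[X] ⧸ Ideal.span {(X : R[X]) ^ 2 - C a}) →+*
      AdjoinRoot ((X : K[X]) ^ 2 - C (i a)) :=
    Ideal.Quotient.lift (Ideal.span {(X : R[X]) ^ 2 - C a})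
      ((AdjoinRoot.mk _).comp (mapRingHom i)) (by
        intro p hp
        rw [Ideal.mem_span_singleton] at hp
        obtain ⟨q, rfl⟩ := hp
        simp only [RingHom.comp_apply, coe_mapRingHom, Polynomial.map_mul, hmapf, map_mul,
          AdjoinRoot.mk_self, zero_mul])
  have hφmk : ∀ p : R[X], φ (Ideal.Quotient.mk (Ideal.span {(X : R[X]) ^ 2 - C a}) p) =
      AdjoinRoot.mk _ (p.map i) := fun p => rfl
  have hSmem : ∀ s : S, ∃ r x, x ∈ ω ∧
      (s : R[X] ⧸ Ideal.span {(X : R[X]) ^ 2 - C a}) =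
        Ideal.Quotient.mk (Ideal.span {(X : R[X]) ^ 2 - C a}) (C r + C x * X) := by
    intro s
    have h : (s : R[X] ⧸ Ideal.span {(X : R[X]) ^ 2 - C a}) ∈
        (S : Set (R[X] ⧸ Ideal.span {(X : R[X]) ^ 2 - C a})) := s.2
    rw [hS] at h
    exact h
  let ψ : S →+* AdjoinRoot ((X : K[X]) ^ 2 - C (i a)) := φ.comp S.subtype
  have hψinj : Function.Injective ψ := by
    rw [injective_iff_map_eq_zero]
    intro s hs
    obtain ⟨r, x, hx, hsa⟩ := hSmem s
    have h0 : AdjoinRoot.mk ((X : K[X]) ^ 2 - C (i a)) (C (i r) + C (i x) * X) = 0 := by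
      have h1 : ψ s = AdjoinRoot.mk _ ((C r + C x * X).map i) := by
        show φ (s : R[X] ⧸ Ideal.span {(X : R[X]) ^ 2 - C a}) = _
        rw [hsa, hφmk]
      rw [h1] at hs
      simpa [Polynomial.map_add, Polynomial.map_mul] using hs
    rw [AdjoinRoot.mk_eq_zero] at h0
    obtain ⟨hr, hx0⟩ := aux_lin_zero h0
    have hr' : r = 0 := hinj (by simpa using hr)
    have hx' : x = 0 := hinj (by simpa using hx0)
    have : (s : R[X] ⧸ Ideal.span {(X : R[X]) ^ 2 - C a}) = 0 := by
      rw [hsa, hr', hx']; simp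
    exact Subtype.ext this
  haveI hdom : IsDomain S := Function.Injective.isDomain ψ hψinj
  have hprime : (maximalIdeal R).IsPrime := (maximalIdeal.isMaximal R).isPrime
  have unitcrit : ∀ (s : S) (r x : R), x ∈ ω →
      (s : R[X] ⧸ Ideal.span {(X : R[X]) ^ 2 - C a}) =
        Ideal.Quotient.mk (Ideal.span {(X : R[X]) ^ 2 - C a}) (C r + C x * X) →
      r ∉ maximalIdeal R → IsUnit s := by
    intro s r x hx hsa hr
    have hu : IsUnit (r * r - x * x * a) := by
      by_contra hnu
      have hm : r * r - x * x * a ∈ maximalIdeal R := (mem_maximalIdeal _).mpr hnu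
      have hm2 : r * r ∈ maximalIdeal R := by
        have heq : r * r = (r * r - x * x * a) + x * x * a := by ring
        rw [heq]
        exact Ideal.add_mem _ hm (Ideal.mul_mem_left _ _ ham)
      rcases hprime.mem_or_mem hm2 with h | h <;> exact hr h
    obtain ⟨w, hw⟩ := hu.exists_right_inv
    refine IsUnit.of_mul_eq_one (a := s)
      ⟨Ideal.Quotient.mk (Ideal.span {(X : R[X]) ^ 2 - C a}) (C (r * w) + C (-(x * w)) * X),
        ?_⟩ ?_
    · rw [← SetLike.mem_coe, hS]
      exact ⟨r * w, -(x * w), ω.neg_mem (ω.mul_mem_right w hx), rfl⟩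
    · apply Subtype.ext
      show (s : R[X] ⧸ Ideal.span {(X : R[X]) ^ 2 - C a}) * _ = 1
      rw [hsa, aux_mulrep]
      have h1 : r * (r * w) + x * -(x * w) * a = 1 := by linear_combination hw
      have h2 : r * -(x * w) + x * (r * w) = 0 := by ring
      rw [h1, h2, C_0, zero_mul, add_zero, C_1, map_one]
  have nonunitcrit : ∀ (s : S) (r x : R), x ∈ ω →
      (s : R[X] ⧸ Ideal.span {(X : R[X]) ^ 2 - C a}) =
        Ideal.Quotient.mk (Ideal.span {(X : R[X]) ^ 2 - C a}) (C r + C x * X) →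
      r ∈ maximalIdeal R → ¬ IsUnit s := by
    intro s r x hx hsa hr hus
    obtain ⟨t, ht⟩ := hus.exists_right_inv
    obtain ⟨r', x', hx', hta⟩ := hSmem t
    have h1 : (s : R[X] ⧸ Ideal.span {(X : R[X]) ^ 2 - C a}) *
        (t : R[X] ⧸ Ideal.span {(X : R[X]) ^ 2 - C a}) = 1 := by
      have h := congrArg (Subtype.val) ht
      simpa using h
    rw [hsa, hta, aux_mulrep] at h1
    have h2 : (1 : R[X] ⧸ Ideal.span {(X : R[X]) ^ 2 - C a}) =
        Ideal.Quotient.mk (Ideal.span {(X : R[X]) ^ 2 - C a}) (C 1 + C 0 * X) := by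
      rw [C_0, zero_mul, add_zero, C_1, map_one]
    rw [h2] at h1
    have h3 := (aux_rep_eq h1).1
    have hmem : r * r' + x * x' * a ∈ maximalIdeal R :=
      Ideal.add_mem _ (Ideal.mul_mem_right _ _ hr) (Ideal.mul_mem_left _ _ ham)
    rw [h3] at hmem
    exact (Ideal.IsMaximal.ne_top (maximalIdeal.isMaximal R))
      ((Ideal.eq_top_iff_one _).mpr hmem)
  haveI hloc : IsLocalRing S := by
    apply IsLocalRing.of_nonunits_add
    intro s t hs ht
    obtain ⟨r, x, hx, hsa⟩ := hSmem s
    obtain ⟨r', x', hx', hta⟩ := hSmem t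
    have hrm : r ∈ maximalIdeal R := by
      by_contra h
      exact hs (unitcrit s r x hx hsa h)
    have hrm' : r' ∈ maximalIdeal R := by
      by_contra h
      exact ht (unitcrit t r' x' hx' hta h)
    have hadd : ((s + t : S) : R[X] ⧸ Ideal.span {(X : R[X]) ^ 2 - C a}) =
        Ideal.Quotient.mk (Ideal.span {(X : R[X]) ^ 2 - C a})
          (C (r + r') + C (x + x') * X) := by
      push_cast
      rw [hsa, hta, ← map_add]
      congr 1
      simp only [C_add]
      ring
    exact fun hu => nonunitcrit (s + t) (r + r') (x + x') (ω.add_mem hx hx') hadd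
      (Ideal.add_mem _ hrm hrm') hu
  refine ⟨hdom, hloc, ?_⟩
  intro s
  rw [mem_maximalIdeal, mem_nonunits_iff]
  constructor
  · intro hns
    obtain ⟨r, x, hx, hsa⟩ := hSmem s
    have hrm : r ∈ maximalIdeal R := by
      by_contra h
      exact hns (unitcrit s r x hx hsa h)
    exact ⟨r, hrm, x, hx, hsa⟩
  · rintro ⟨r, hrm, x, hx, hsa⟩
    exact nonunitcrit s r x hx hsa hrm
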